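/- Fix a ∈ (0,1), d ∈ (0,1), and c > 0, and let G(s) := a(1-a)(1-d)·((1 - exp(-s·d))/s)·exp(-(a(1-d)/d)·(1 - exp(-s·d))). If c < a·d·(1-a)·(1-d), then there exists a unique s* > 0 with G(s*) = c; if c ≥ a·d·(1-a)·(1-d), then there is no s > 0 with G(s) = c. -/

import Mathlib

open Real Set Filter

private noncomputable def Gfun (a d : ℝ) (s : ℝ) : ℝ :=
  a * (1 - a) * (1 - d) * ((1 - Real.exp (-(s * d))) / s) *
    Real.exp (-(a * (1 - d) / d * (1 - Real.exp (-(s * d)))))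

variable {a d : ℝ}

private lemma mid_pos (hd : 0 < d) {s : ℝ} (hs : 0 < s) :
    0 < (1 - Real.exp (-(s * d))) / s := by
  apply div_pos _ hs
  have : Real.exp (-(s * d)) < 1 := by
    rw [Real.exp_lt_one_iff]
    nlinarith
  linarith

private lemma mid_lt (hd : 0 < d) {s : ℝ} (hs : 0 < s) :
    (1 - Real.exp (-(s * d))) / s < d := by
  rw [div_lt_iff₀ hs]
  have h := Real.add_one_lt_exp (x := -(s * d)) (by nlinarith)
  nlinarith

private lemma ef_le_one (ha : 0 < a) (ha1 : a < 1) (hd : 0 < d) (hd1 : d < 1)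
    {s : ℝ} (hs : 0 < s) :
    Real.exp (-(a * (1 - d) / d * (1 - Real.exp (-(s * d))))) ≤ 1 := by
  rw [Real.exp_le_one_iff]
  have h1 : Real.exp (-(s * d)) ≤ 1 := Real.exp_le_one_iff.mpr (by nlinarith)
  have h2 : 0 ≤ a * (1 - d) / d := div_nonneg (by nlinarith) hd.le
  nlinarith

private lemma G_pos (ha : 0 < a) (ha1 : a < 1) (hd : 0 < d) (hd1 : d < 1)
    {s : ℝ} (hs : 0 < s) : 0 < Gfun a d s := by
  unfold Gfun
  exact mul_pos (mul_pos (mul_pos (mul_pos ha (by linarith)) (by linarith))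
    (mid_pos hd hs)) (Real.exp_pos _)

private lemma G_lt (ha : 0 < a) (ha1 : a < 1) (hd : 0 < d) (hd1 : d < 1)
    {s : ℝ} (hs : 0 < s) : Gfun a d s < a * d * (1 - a) * (1 - d) := by
  unfold Gfun
  have h1 := mid_pos hd hs
  have h2 := mid_lt hd hs
  have h3 := ef_le_one ha ha1 hd hd1 hs
  have h4 := Real.exp_pos (-(a * (1 - d) / d * (1 - Real.exp (-(s * d)))))
  have hC : 0 < a * (1 - a) * (1 - d) := mul_pos (mul_pos ha (by linarith)) (by linarith)
  nlinarith [mul_lt_mul_of_pos_left h2 hC,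
    mul_le_of_le_one_right (le_of_lt (mul_pos hC h1)) h3]

private lemma phi_hasDeriv (x : ℝ) (hx : 0 < x) :
    HasDerivAt (fun x => (1 - Real.exp (-x)) / x)
      ((Real.exp (-x) * x - (1 - Real.exp (-x))) / x ^ 2) x := by
  have h1 : HasDerivAt (fun x : ℝ => 1 - Real.exp (-x)) (Real.exp (-x)) x := by
    have h := (Real.hasDerivAt_exp (-x)).comp x (hasDerivAt_neg x)
    simpa using h.const_sub 1
  have := h1.div (hasDerivAt_id x) (ne_of_gt hx)
  simp only [mul_one, id_eq] at this
  exact this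

private lemma phi_anti : StrictAntiOn (fun x => (1 - Real.exp (-x)) / x) (Set.Ioi (0:ℝ)) := by
  apply strictAntiOn_of_deriv_neg (convex_Ioi 0)
  · exact ContinuousOn.div
      (Continuous.continuousOn (by continuity)) continuousOn_id
      (fun x hx => ne_of_gt hx)
  · intro x hx
    rw [interior_Ioi] at hx
    rw [(phi_hasDeriv x hx).deriv]
    apply div_neg_of_neg_of_pos _ (pow_pos hx 2)
    have h1 : x + 1 < Real.exp x := Real.add_one_lt_exp (ne_of_gt hx)
    have h2 : Real.exp (-x) * Real.exp x = 1 := by rw [← Real.exp_add]; simp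
    nlinarith [Real.exp_pos (-x), mul_lt_mul_of_pos_left h1 (Real.exp_pos (-x))]

private lemma mid_anti (hd : 0 < d) {s t : ℝ} (hs : 0 < s) (hst : s < t) :
    (1 - Real.exp (-(t * d))) / t < (1 - Real.exp (-(s * d))) / s := by
  have ht : 0 < t := lt_trans hs hst
  have h := phi_anti (Set.mem_Ioi.mpr (mul_pos hs hd)) (Set.mem_Ioi.mpr (mul_pos ht hd))
    (mul_lt_mul_of_pos_right hst hd)
  simp only at h
  have h2 : (1 - Real.exp (-(t * d))) / t / d < (1 - Real.exp (-(s * d))) / s / d := by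
    rw [div_div, div_div]; exact h
  exact (div_lt_div_iff_of_pos_right hd).mp h2

private lemma G_anti (ha : 0 < a) (ha1 : a < 1) (hd : 0 < d) (hd1 : d < 1) :
    StrictAntiOn (Gfun a d) (Set.Ioi (0:ℝ)) := by
  intro s hs t ht hst
  rw [Set.mem_Ioi] at hs ht
  unfold Gfun
  have hC : 0 < a * (1 - a) * (1 - d) := mul_pos (mul_pos ha (by linarith)) (by linarith)
  have hmid := mid_anti hd hs hst
  have hmt := mid_pos hd ht
  have hk : 0 < a * (1 - d) / d := div_pos (mul_pos ha (by linarith)) hd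
  have hef : Real.exp (-(a * (1 - d) / d * (1 - Real.exp (-(t * d))))) <
      Real.exp (-(a * (1 - d) / d * (1 - Real.exp (-(s * d))))) := by
    apply Real.exp_lt_exp.mpr
    have : Real.exp (-(t * d)) < Real.exp (-(s * d)) := by
      apply Real.exp_lt_exp.mpr
      nlinarith
    nlinarith
  have heft := Real.exp_pos (-(a * (1 - d) / d * (1 - Real.exp (-(t * d)))))
  have hefs := Real.exp_pos (-(a * (1 - d) / d * (1 - Real.exp (-(s * d)))))
  nlinarith [mul_lt_mul_of_pos_right hmid hefs,
    mul_lt_mul_of_pos_left hef hmt,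
    mul_lt_mul_of_pos_left (mul_lt_mul_of_pos_right hmid hefs) hC,
    mul_lt_mul_of_pos_left (mul_lt_mul_of_pos_left hef hmt) hC]

private lemma G_cont (hd : 0 < d) : ContinuousOn (Gfun a d) (Set.Ioi (0:ℝ)) := by
  unfold Gfun
  apply ContinuousOn.mul
  · apply ContinuousOn.mul continuousOn_const
    exact ContinuousOn.div (Continuous.continuousOn (by continuity)) continuousOn_id
      (fun x hx => ne_of_gt hx)
  · exact Continuous.continuousOn (by continuity)

private lemma G_tendsto (ha : 0 < a) (ha1 : a < 1) (hd : 0 < d) (hd1 : d < 1) :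
    Filter.Tendsto (Gfun a d) (nhdsWithin 0 (Set.Ioi 0))
      (nhds (a * d * (1 - a) * (1 - d))) := by
  have h1 : HasDerivAt (fun s : ℝ => -(s * d)) (-d) 0 := by
    exact (hasDerivAt_mul_const (x := (0:ℝ)) d).neg
  have h2 := (Real.hasDerivAt_exp (-(0 * d))).comp 0 h1
  have hd0 : HasDerivAt (fun s : ℝ => 1 - Real.exp (-(s * d))) d 0 := by
    simpa using h2.const_sub 1
  have hs0 := hasDerivAt_iff_tendsto_slope.mp hd0
  have hslope : Filter.Tendsto (fun s => (1 - Real.exp (-(s * d))) / s)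
      (nhdsWithin 0 (Set.Ioi 0)) (nhds d) := by
    apply Filter.Tendsto.congr' _
      (hs0.mono_left (nhdsWithin_mono _ (fun x hx => ne_of_gt hx)))
    filter_upwards [self_mem_nhdsWithin] with x hx
    simp [slope_def_field]
  have hef : Filter.Tendsto
      (fun s => Real.exp (-(a * (1 - d) / d * (1 - Real.exp (-(s * d))))))
      (nhdsWithin 0 (Set.Ioi 0)) (nhds 1) := by
    have hc : Continuous
        (fun s : ℝ => Real.exp (-(a * (1 - d) / d * (1 - Real.exp (-(s * d)))))) := by
      continuity
    have := (hc.tendsto 0).mono_left (nhdsWithin_le_nhds (s := Set.Ioi 0))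
    simpa using this
  have := (Filter.Tendsto.mul
    (tendsto_const_nhds (x := a * (1 - a) * (1 - d))) hslope).mul hef
  unfold Gfun
  convert this using 2 <;> ring

private lemma G_far (ha : 0 < a) (ha1 : a < 1) (hd : 0 < d) (hd1 : d < 1)
    {c : ℝ} (hc : 0 < c) {N : ℝ} (hN : a * (1 - a) * (1 - d) / c < N) (hN0 : 0 < N) :
    Gfun a d N < c := by
  unfold Gfun
  have hC : 0 < a * (1 - a) * (1 - d) := mul_pos (mul_pos ha (by linarith)) (by linarith)
  have he := Real.exp_pos (-(N * d))
  have h1 : (1 - Real.exp (-(N * d))) / N ≤ 1 / N := by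
    gcongr
    linarith
  have h2 := ef_le_one ha ha1 hd hd1 hN0
  have hmidpos := mid_pos hd hN0
  have hefpos := Real.exp_pos (-(a * (1 - d) / d * (1 - Real.exp (-(N * d)))))
  have hCN : a * (1 - a) * (1 - d) * (1 / N) < c := by
    rw [div_lt_iff₀ hc] at hN
    rw [mul_one_div, div_lt_iff₀ hN0]
    linarith
  have t1 : a * (1 - a) * (1 - d) * ((1 - Real.exp (-(N * d))) / N) *
      Real.exp (-(a * (1 - d) / d * (1 - Real.exp (-(N * d))))) ≤
      a * (1 - a) * (1 - d) * ((1 - Real.exp (-(N * d))) / N) :=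
    mul_le_of_le_one_right (le_of_lt (mul_pos hC hmidpos)) h2
  have t2 : a * (1 - a) * (1 - d) * ((1 - Real.exp (-(N * d))) / N) ≤
      a * (1 - a) * (1 - d) * (1 / N) := mul_le_mul_of_nonneg_left h1 hC.le
  linarith



/-- Proposition 2: an interior symmetric equilibrium `s* > 0` solving `G(s*) = c`
exists if and only if `c < a·d·(1-a)·(1-d)`, and in that case it is unique, where
`G(s) = a(1-a)(1-d)·((1 - exp(-s·d))/s)·exp(-(a(1-d)/d)·(1 - exp(-s·d)))`. -/
theorem interior_equilibrium_existence_uniqueness (a d c : ℝ)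
    (ha : a ∈ Set.Ioo (0 : ℝ) 1) (hd : d ∈ Set.Ioo (0 : ℝ) 1) (hc : 0 < c) :
    (c < a * d * (1 - a) * (1 - d) →
      ∃! s : ℝ, 0 < s ∧
        a * (1 - a) * (1 - d) * ((1 - Real.exp (-(s * d))) / s) *
          Real.exp (-(a * (1 - d) / d * (1 - Real.exp (-(s * d))))) = c) ∧
    (a * d * (1 - a) * (1 - d) ≤ c →
      ¬ ∃ s : ℝ, 0 < s ∧
        a * (1 - a) * (1 - d) * ((1 - Real.exp (-(s * d))) / s) *
          Real.exp (-(a * (1 - d) / d * (1 - Real.exp (-(s * d))))) = c) := by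
  obtain ⟨ha0, ha1⟩ := ha
  obtain ⟨hd0, hd1⟩ := hd
  have hGdef : ∀ s : ℝ, a * (1 - a) * (1 - d) * ((1 - Real.exp (-(s * d))) / s) *
      Real.exp (-(a * (1 - d) / d * (1 - Real.exp (-(s * d))))) = Gfun a d s :=
    fun s => rfl
  constructor
  · intro hlt
    have hCpos : 0 < a * (1 - a) * (1 - d) :=
      mul_pos (mul_pos ha0 (by linarith)) (by linarith)
    set N : ℝ := a * (1 - a) * (1 - d) / c + 1 with hNdef
    have hN0 : 0 < N := by
      rw [hNdef]
      have : 0 < a * (1 - a) * (1 - d) / c := div_pos hCpos hc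
      linarith
    have hGN : Gfun a d N < c := G_far ha0 ha1 hd0 hd1 hc (by linarith) hN0
    have hev := (G_tendsto ha0 ha1 hd0 hd1).eventually (eventually_gt_nhds hlt)
    have hIoo : Set.Ioo (0:ℝ) N ∈ nhdsWithin 0 (Set.Ioi 0) :=
      Ioo_mem_nhdsGT_of_mem ⟨le_refl 0, hN0⟩
    obtain ⟨ε, hcε, hεIoo⟩ :=
      (hev.and (Filter.eventually_of_mem hIoo (fun x hx => hx))).exists
    have hsub : Set.Icc ε N ⊆ Set.Ioi (0:ℝ) :=
      fun x hx => lt_of_lt_of_le hεIoo.1 hx.1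
    have hivt := intermediate_value_Icc' (le_of_lt hεIoo.2)
      (((G_cont (a := a) hd0)).mono hsub)
    obtain ⟨s, hsmem, hGs⟩ := hivt ⟨hGN.le, hcε.le⟩
    have hs0 : 0 < s := lt_of_lt_of_le hεIoo.1 hsmem.1
    refine ⟨s, ⟨hs0, by rw [hGdef]; exact hGs⟩, ?_⟩
    rintro y ⟨hy0, hGy⟩
    rw [hGdef] at hGy
    exact (G_anti ha0 ha1 hd0 hd1).injOn (Set.mem_Ioi.mpr hy0)
      (Set.mem_Ioi.mpr hs0) (hGy.trans hGs.symm)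
  · rintro hge ⟨s, hs0, hGs⟩
    rw [hGdef] at hGs
    have := G_lt ha0 ha1 hd0 hd1 hs0
    linarith
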